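/- Suppose V has dimension 3 over ℝ. Then for every element U of the Clifford algebra Cl(Q), writing Û = involute(U), Ũ = reverse(U), Û̃ = reverse(involute(U)), both of the following elements are scalars (lie in the range of the algebra map ℝ → Cl(Q)): the sum U·Ũ + U·Û + U·Û̃ + Û·Û̃ + Ũ·Û̃ + Û·Ũ, and the sum U·Û·Û̃ + U·Ũ·Û̃ + U·Û·Ũ + Û·Ũ·Û̃. -/

import Mathlib

open CliffordAlgebra

set_option maxHeartbeats 1000000 in
theorem stmt_16 {V : Type*} [AddCommGroup V] [Module ℝ V] (Q : QuadraticForm ℝ V)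
    (h : Module.finrank ℝ V = 3) (U : CliffordAlgebra Q) :
    (U * reverse U + U * involute U + U * reverse (involute U) +
        involute U * reverse (involute U) + reverse U * reverse (involute U) +
        involute U * reverse U ∈
      Set.range (algebraMap ℝ (CliffordAlgebra Q))) ∧
    (U * involute U * reverse (involute U) + U * reverse U * reverse (involute U) +
        U * involute U * reverse U + involute U * reverse U * reverse (involute U) ∈
      Set.range (algebraMap ℝ (CliffordAlgebra Q))) := by
  haveI : Module.Finite ℝ V := Module.finite_of_finrank_pos (by omega)
  obtain ⟨v0, hv0⟩ := LinearMap.BilinForm.exists_orthogonal_basis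
    (QuadraticForm.associated_isSymm ℝ Q)
  set v : Module.Basis (Fin 3) ℝ V := v0.reindex (finCongr h) with hv
  set E0 : CliffordAlgebra Q := ι Q (v 0) with hE0
  set E1 : CliffordAlgebra Q := ι Q (v 1) with hE1
  set E2 : CliffordAlgebra Q := ι Q (v 2) with hE2
  set q0 : ℝ := Q (v 0) with hq0
  set q1 : ℝ := Q (v 1) with hq1
  set q2 : ℝ := Q (v 2) with hq2
  have horth : ∀ i j : Fin 3, i ≠ j → ι Q (v i) * ι Q (v j) = -(ι Q (v j) * ι Q (v i)) := by
    intro i j hij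
    refine ι_mul_ι_comm_of_isOrtho (QuadraticMap.associated_isOrtho.mp ?_)
    simp only [hv, Module.Basis.reindex_apply]
    exact hv0 ((finCongr h).symm.injective.ne hij)
  have hsq0 : E0 * E0 = q0 • (1 : CliffordAlgebra Q) := by
    rw [hE0, ι_sq_scalar, Algebra.algebraMap_eq_smul_one, hq0]
  have hsq1 : E1 * E1 = q1 • (1 : CliffordAlgebra Q) := by
    rw [hE1, ι_sq_scalar, Algebra.algebraMap_eq_smul_one, hq1]
  have hsq2 : E2 * E2 = q2 • (1 : CliffordAlgebra Q) := by
    rw [hE2, ι_sq_scalar, Algebra.algebraMap_eq_smul_one, hq2]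
  have hsq0' : ∀ X : CliffordAlgebra Q, E0 * (E0 * X) = q0 • X := fun X => by
    rw [← mul_assoc, hsq0, smul_mul_assoc, one_mul]
  have hsq1' : ∀ X : CliffordAlgebra Q, E1 * (E1 * X) = q1 • X := fun X => by
    rw [← mul_assoc, hsq1, smul_mul_assoc, one_mul]
  have hsq2' : ∀ X : CliffordAlgebra Q, E2 * (E2 * X) = q2 • X := fun X => by
    rw [← mul_assoc, hsq2, smul_mul_assoc, one_mul]
  have h10 : E1 * E0 = -(E0 * E1) := horth 1 0 (by decide)
  have h20 : E2 * E0 = -(E0 * E2) := horth 2 0 (by decide)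
  have h21 : E2 * E1 = -(E1 * E2) := horth 2 1 (by decide)
  have h10' : ∀ X : CliffordAlgebra Q, E1 * (E0 * X) = -(E0 * (E1 * X)) := fun X => by
    rw [← mul_assoc, h10, neg_mul, mul_assoc]
  have h20' : ∀ X : CliffordAlgebra Q, E2 * (E0 * X) = -(E0 * (E2 * X)) := fun X => by
    rw [← mul_assoc, h20, neg_mul, mul_assoc]
  have h21' : ∀ X : CliffordAlgebra Q, E2 * (E1 * X) = -(E1 * (E2 * X)) := fun X => by
    rw [← mul_assoc, h21, neg_mul, mul_assoc]
  have key : ∀ a0 a1 a2 a3 a4 a5 a6 a7 b0 b1 b2 b3 b4 b5 b6 b7 : ℝ,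
      (a0 • (1 : CliffordAlgebra Q) + a1 • E0 + a2 • E1 + a3 • E2 + a4 • (E0*E1) +
        a5 • (E0*E2) + a6 • (E1*E2) + a7 • (E0*(E1*E2))) *
      (b0 • (1 : CliffordAlgebra Q) + b1 • E0 + b2 • E1 + b3 • E2 + b4 • (E0*E1) +
        b5 • (E0*E2) + b6 • (E1*E2) + b7 • (E0*(E1*E2))) =
      (a0*b0 + a1*b1*q0 + a2*b2*q1 + a3*b3*q2 - a4*b4*q0*q1 - a5*b5*q0*q2 - a6*b6*q1*q2 - a7*b7*q0*q1*q2) • (1 : CliffordAlgebra Q) + (a0*b1 + a1*b0 - a2*b4*q1 - a3*b5*q2 + a4*b2*q1 + a5*b3*q2 - a6*b7*q1*q2 - a7*b6*q1*q2) • E0 + (a0*b2 + a1*b4*q0 + a2*b0 - a3*b6*q2 - a4*b1*q0 + a5*b7*q0*q2 + a6*b3*q2 + a7*b5*q0*q2) • E1 + (a0*b3 + a1*b5*q0 + a2*b6*q1 + a3*b0 - a4*b7*q0*q1 - a5*b1*q0 - a6*b2*q1 - a7*b4*q0*q1) • E2 + (a0*b4 + a1*b2 - a2*b1 + a3*b7*q2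 + a4*b0 - a5*b6*q2 + a6*b5*q2 + a7*b3*q2) • (E0*E1) + (a0*b5 + a1*b3 - a2*b7*q1 - a3*b1 + a4*b6*q1 + a5*b0 - a6*b4*q1 - a7*b2*q1) • (E0*E2) + (a0*b6 + a1*b7*q0 + a2*b3 - a3*b2 - a4*b5*q0 + a5*b4*q0 + a6*b0 + a7*b1*q0) • (E1*E2) + (a0*b7 + a1*b6 - a2*b5 + a3*b4 + a4*b3 - a5*b2 + a6*b1 + a7*b0) • (E0*(E1*E2)) := by
    intro a0 a1 a2 a3 a4 a5 a6 a7 b0 b1 b2 b3 b4 b5 b6 b7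
    simp only [mul_add, add_mul, smul_mul_assoc, mul_smul_comm, mul_assoc, one_mul, mul_one,
      hsq0', hsq1', hsq2', hsq0, hsq1, hsq2, h10', h20', h21', h10, h20, h21,
      mul_neg, neg_mul, smul_neg, neg_neg, smul_smul]
    module
  have hrep : ∀ x : CliffordAlgebra Q, ∃ c0 c1 c2 c3 c4 c5 c6 c7 : ℝ,
      x = c0 • (1 : CliffordAlgebra Q) + c1 • E0 + c2 • E1 + c3 • E2 + c4 • (E0*E1) +
        c5 • (E0*E2) + c6 • (E1*E2) + c7 • (E0*(E1*E2)) := by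
    intro x
    induction x using CliffordAlgebra.induction with
    | algebraMap r =>
      exact ⟨r, 0, 0, 0, 0, 0, 0, 0, by rw [Algebra.algebraMap_eq_smul_one]; module⟩
    | ι m =>
      refine ⟨0, v.repr m 0, v.repr m 1, v.repr m 2, 0, 0, 0, 0, ?_⟩
      conv_lhs => rw [← Module.Basis.sum_repr v m]
      rw [map_sum, Fin.sum_univ_three]
      simp only [map_smul, ← hE0, ← hE1, ← hE2]
      module
    | mul x y hx hy =>
      obtain ⟨a0, a1, a2, a3, a4, a5, a6, a7, hx'⟩ := hx
      obtain ⟨b0, b1, b2, b3, b4, b5, b6, b7, hy'⟩ := hy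
      refine ⟨(a0*b0 + a1*b1*q0 + a2*b2*q1 + a3*b3*q2 - a4*b4*q0*q1 - a5*b5*q0*q2 - a6*b6*q1*q2 - a7*b7*q0*q1*q2), (a0*b1 + a1*b0 - a2*b4*q1 - a3*b5*q2 + a4*b2*q1 + a5*b3*q2 - a6*b7*q1*q2 - a7*b6*q1*q2), (a0*b2 + a1*b4*q0 + a2*b0 - a3*b6*q2 - a4*b1*q0 + a5*b7*q0*q2 + a6*b3*q2 + a7*b5*q0*q2), (a0*b3 + a1*b5*q0 + a2*b6*q1 + a3*b0 - a4*b7*q0*q1 - a5*b1*q0 - a6*b2*q1 - a7*b4*q0*q1), (a0*b4 + a1*b2 - a2*b1 + a3*b7*q2 + a4*b0 - a5*b6*q2 + a6*b5*q2 + a7*b3*q2), (a0*b5 + a1*b3 - a2*b7*q1 - a3*b1 + a4*b6*q1 + a5*b0 - a6*b4*q1 - a7*b2*q1), (a0*b6 + a1*b7*q0 + a2*b3 - a3*b2 - a4*b5*q0 + a5*b4*q0 + a6*b0 + a7*b1*q0), (a0*b7 + a1*b6 - a2*b5 + a3*b4 + a4*b3 - a5*b2 + a6*b1 + a7*b0),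 ?_⟩
      rw [hx', hy']
      exact key a0 a1 a2 a3 a4 a5 a6 a7 b0 b1 b2 b3 b4 b5 b6 b7
    | add x y hx hy =>
      obtain ⟨a0, a1, a2, a3, a4, a5, a6, a7, hx'⟩ := hx
      obtain ⟨b0, b1, b2, b3, b4, b5, b6, b7, hy'⟩ := hy
      exact ⟨a0+b0, a1+b1, a2+b2, a3+b3, a4+b4, a5+b5, a6+b6, a7+b7,
        by rw [hx', hy']; module⟩
  obtain ⟨c0, c1, c2, c3, c4, c5, c6, c7, hU⟩ := hrep U
  have hB : involute U = (c0) • (1 : CliffordAlgebra Q) + (-c1) • E0 + (-c2) • E1 + (-c3) • E2 + (c4) • (E0*E1) + (c5) • (E0*E2) + (c6) • (E1*E2) + (-c7) • (E0*(E1*E2)) := by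
    rw [hU]
    simp only [map_add, map_smul, hE0, hE1, hE2, map_mul, map_one, involute_ι]
    simp only [← hE0, ← hE1, ← hE2, mul_neg, neg_mul, neg_neg, smul_neg]
    module
  have hC : reverse U = (c0) • (1 : CliffordAlgebra Q) + (c1) • E0 + (c2) • E1 + (c3) • E2 + (-c4) • (E0*E1) + (-c5) • (E0*E2) + (-c6) • (E1*E2) + (-c7) • (E0*(E1*E2)) := by
    rw [hU]
    simp only [map_add, map_smul, hE0, hE1, hE2, reverse.map_mul, reverse.map_one, reverse_ι]
    simp only [← hE0, ← hE1, ← hE2]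
    simp only [mul_assoc, one_mul, mul_one,
      hsq0', hsq1', hsq2', hsq0, hsq1, hsq2, h10', h20', h21', h10, h20, h21,
      mul_neg, neg_mul, smul_neg, neg_neg, smul_smul]
    module
  have hD : reverse (involute U) = (c0) • (1 : CliffordAlgebra Q) + (-c1) • E0 + (-c2) • E1 + (-c3) • E2 + (-c4) • (E0*E1) + (-c5) • (E0*E2) + (-c6) • (E1*E2) + (c7) • (E0*(E1*E2)) := by
    rw [hB]
    simp only [map_add, map_smul, hE0, hE1, hE2, reverse.map_mul, reverse.map_one, reverse_ι]
    simp only [← hE0, ← hE1, ← hE2]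
    simp only [mul_assoc, one_mul, mul_one,
      hsq0', hsq1', hsq2', hsq0, hsq1, hsq2, h10', h20', h21', h10, h20, h21,
      mul_neg, neg_mul, smul_neg, neg_neg, smul_smul]
    module
  constructor
  · refine ⟨(6*c0*c0 - 2*c1*c1*q0 - 2*c2*c2*q1 - 2*c3*c3*q2 + 2*c4*c4*q0*q1 + 2*c5*c5*q0*q2 + 2*c6*c6*q1*q2 + 2*c7*c7*q0*q1*q2), ?_⟩
    rw [hD, hC, hB, hU]
    simp only [key]
    rw [Algebra.algebraMap_eq_smul_one]
    module
  · refine ⟨(4*c0*c0*c0 - 4*c0*c1*c1*q0 - 4*c0*c2*c2*q1 - 4*c0*c3*c3*q2 + 4*c0*c4*c4*q0*q1 + 4*c0*c5*c5*q0*q2 + 4*c0*c6*c6*q1*q2 + 4*c0*c7*c7*q0*q1*q2 - 8*c1*c6*c7*q0*q1*q2 + 8*c2*c5*c7*q0*q1*q2 - 8*c3*c4*c7*q0*q1*q2), ?_⟩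
    rw [hD, hC, hB, hU]
    simp only [key]
    rw [Algebra.algebraMap_eq_smul_one]
    module
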